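/- arXiv:2601.16317 — 3 statements merged into one kernel-verified Lean document; each statement's English description precedes it below -/
import Mathlib

section
/- Let ε > 0, z = e^ε + e^{−ε}, and d ≥ 2. Let T be the ideal TSAC transition matrix (T_{11}=T_{12}=e^ε/z; T_{k,k+1}=e^ε/z and T_{k+1,k}=e^{−ε}/z for 1 ≤ k ≤ d−1 except as modified at the corners; T_{d,d−1}=T_{d,d}=e^{−ε}/z; all other entries zero). Then the vector v with v_k = z₂ e^{−2ε(k−1)}, z₂ = (1−e^{−2ε})/(1−e^{−2dε}), satisfies T v = v. -/
lemma sum_eq_pair' {n : ℕ} (f : Fin n → ℝ) (a b : Fin n) (hab : a ≠ b)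
    (h : ∀ k, k ≠ a → k ≠ b → f k = 0) : ∑ k, f k = f a + f b := by
  classical
  rw [← Finset.sum_pair hab]
  refine (Finset.sum_subset (Finset.subset_univ _) ?_).symm
  intro k _ hk
  simp only [Finset.mem_insert, Finset.mem_singleton, not_or] at hk
  exact h k hk.1 hk.2

/-- The truncated thermal distribution `v_k = z₂ e^{-2ε(k-1)}` is a fixed point of the
ideal TSAC transition matrix. -/
theorem ideal_cooling_limit_is_stationary (d : ℕ) (hd : 2 ≤ d) (ε : ℝ) (hε : 0 < ε)
    (z : ℝ) (hz : z = Real.exp ε + Real.exp (-ε))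
    (T : Matrix (Fin d) (Fin d) ℝ)
    (hT : T = Matrix.of fun (i j : Fin d) =>
      if (i : ℕ) + 1 = (j : ℕ) ∨ ((i : ℕ) = 0 ∧ (j : ℕ) = 0) then Real.exp ε / z
      else if (j : ℕ) + 1 = (i : ℕ) ∨ ((i : ℕ) = d - 1 ∧ (j : ℕ) = d - 1)
        then Real.exp (-ε) / z
      else 0)
    (z₂ : ℝ) (hz₂ : z₂ = (1 - Real.exp (-2 * ε)) / (1 - Real.exp (-2 * (d : ℝ) * ε)))
    (v : Fin d → ℝ) (hv : ∀ i : Fin d, v i = z₂ * Real.exp (-2 * ε * (i : ℕ))) :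
    T.mulVec v = v := by
  obtain ⟨e, rfl⟩ : ∃ e, d = e + 2 := ⟨d - 2, by omega⟩
  subst hT hz
  have hzne : Real.exp ε + Real.exp (-ε) ≠ 0 := by positivity
  funext i
  rcases i with ⟨iv, hiv⟩
  simp only [Matrix.mulVec, dotProduct, Matrix.of_apply]
  by_cases h0 : iv = 0
  · subst h0
    rw [sum_eq_pair' _ ⟨0, by omega⟩ ⟨1, by omega⟩ (by simp [Fin.ext_iff])
        (fun k hka hkb => ?_)]
    · simp only [Fin.val_mk, show e + 2 - 1 = e + 1 from rfl, true_and, and_true,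
        false_and, and_false, true_or, or_true, false_or, or_false, if_true, if_false]
      simp only [hv, Fin.val_mk]
      push_cast
      have key : Real.exp ε * Real.exp (-2*ε) = Real.exp (-ε) := by
        rw [← Real.exp_add]; congr 1; ring
      field_simp
      linear_combination (norm := (ring_nf; rw [Real.exp_zero]; ring)) z₂ * key
    · have h1 : (k : ℕ) ≠ 0 := fun h => hka (Fin.ext h)
      have h2 : (k : ℕ) ≠ 1 := fun h => hkb (Fin.ext h)
      simp only [Fin.val_mk, show e + 2 - 1 = e + 1 from rfl, true_and, and_true,
        false_and, and_false, true_or, or_true, false_or, or_false, if_true, if_false]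
      rw [if_neg (by omega), if_neg (by omega), zero_mul]
  · by_cases hl : iv = e + 1
    · subst hl
      rw [sum_eq_pair' _ ⟨e, by omega⟩ ⟨e + 1, by omega⟩ (by simp [Fin.ext_iff])
          (fun k hka hkb => ?_)]
      · simp only [Fin.val_mk, show e + 2 - 1 = e + 1 from rfl, true_and, and_true,
          false_and, and_false, true_or, or_true, false_or, or_false, if_true, if_false]
        rw [if_neg (by omega), if_neg (by omega)]
        simp only [hv, Fin.val_mk]
        push_cast
        have key : Real.exp (-ε) * Real.exp (-2*ε*(e:ℝ)) =
            Real.exp ε * Real.exp (-2*ε*((e:ℝ)+1)) := by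
          rw [← Real.exp_add, ← Real.exp_add]; congr 1; ring
        field_simp
        linear_combination (norm := ring_nf) z₂ * key
      · have h1 : (k : ℕ) ≠ e := fun h => hka (Fin.ext h)
        have h2 : (k : ℕ) ≠ e + 1 := fun h => hkb (Fin.ext h)
        simp only [Fin.val_mk, show e + 2 - 1 = e + 1 from rfl, true_and, and_true,
          false_and, and_false, true_or, or_true, false_or, or_false, if_true, if_false]
        rw [if_neg (by omega), if_neg (by omega), zero_mul]
    · obtain ⟨m, rfl⟩ := Nat.exists_eq_succ_of_ne_zero h0
      have hm : m + 2 < e + 2 := by omega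
      rw [sum_eq_pair' _ ⟨m, by omega⟩ ⟨m + 2, by omega⟩ (by simp [Fin.ext_iff])
          (fun k hka hkb => ?_)]
      · simp only [Fin.val_mk, Nat.succ_eq_add_one, show e + 2 - 1 = e + 1 from rfl,
          true_and, and_true, false_and, and_false, true_or, or_true, false_or,
          or_false, if_true, if_false]
        rw [if_neg (by omega)]
        simp only [hv, Fin.val_mk, Nat.succ_eq_add_one]
        push_cast
        have key1 : Real.exp (-ε) * Real.exp (-2*ε*(m:ℝ)) =
            Real.exp ε * Real.exp (-2*ε*((m:ℝ)+1)) := by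
          rw [← Real.exp_add, ← Real.exp_add]; congr 1; ring
        have key2 : Real.exp ε * Real.exp (-2*ε*((m:ℝ)+2)) =
            Real.exp (-ε) * Real.exp (-2*ε*((m:ℝ)+1)) := by
          rw [← Real.exp_add, ← Real.exp_add]; congr 1; ring
        field_simp
        linear_combination (norm := ring_nf) z₂ * key1 + z₂ * key2
      · have h1 : (k : ℕ) ≠ m := fun h => hka (Fin.ext h)
        have h2 : (k : ℕ) ≠ m + 2 := fun h => hkb (Fin.ext h)
        simp only [Fin.val_mk, Nat.succ_eq_add_one, show e + 2 - 1 = e + 1 from rfl,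
          true_and, and_true, false_and, and_false, true_or, or_true, false_or,
          or_false, if_true, if_false]
        rw [if_neg (by omega), if_neg (by omega), zero_mul]
end

section
/- Let ε > 0 and E = tanh ε. Consider the root λ₁(η) = [2 + dC + √((2+dC)² − 4(1−E²))]/(2(1+E)) with dC = 2η/(1−η), viewed as a function of η ∈ [0,1). Then λ₁(0) = 1 and the derivative of λ₁ at η = 0 equals 1/E = 1/tanh ε. -/
/-- Perturbative expansion of the dominant root: `λ₁(0) = 1` and `λ₁'(0) = 1/tanh ε`. -/
theorem tsac_dominant_root_perturbation (ε : ℝ) (hε : 0 < ε) (E : ℝ) (hE : E = Real.tanh ε)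
    (l₁ : ℝ → ℝ)
    (hl₁ : ∀ η : ℝ, l₁ η =
      (2 + 2 * η / (1 - η) +
        Real.sqrt ((2 + 2 * η / (1 - η)) ^ 2 - 4 * (1 - E ^ 2))) / (2 * (1 + E))) :
    l₁ 0 = 1 ∧ HasDerivAt l₁ (1 / E) 0 := by
  have hEpos : 0 < E := by
    rw [hE, Real.tanh_eq_sinh_div_cosh]
    exact div_pos (Real.sinh_pos_iff.mpr hε) (Real.cosh_pos ε)
  have hE1 : 0 < 1 + E := by linarith
  have hsq : Real.sqrt ((2 + 2 * (0:ℝ) / (1 - 0)) ^ 2 - 4 * (1 - E ^ 2)) = 2 * E := by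
    have : (2 + 2 * (0:ℝ) / (1 - 0)) ^ 2 - 4 * (1 - E ^ 2) = (2 * E) ^ 2 := by ring
    rw [this, Real.sqrt_sq (by positivity)]
  have hval : l₁ 0 = 1 := by
    rw [hl₁ 0, hsq]; field_simp; ring
  refine ⟨hval, ?_⟩
  have hfun : l₁ = fun η => (2 + 2 * η / (1 - η) +
      Real.sqrt ((2 + 2 * η / (1 - η)) ^ 2 - 4 * (1 - E ^ 2))) / (2 * (1 + E)) :=
    funext hl₁
  rw [hfun]
  -- derivative of d(η) = 2η/(1-η) at 0 is 2
  have hd : HasDerivAt (fun η : ℝ => 2 * η / (1 - η)) 2 0 := by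
    have h1 : HasDerivAt (fun η : ℝ => 2 * η) 2 0 := by
      simpa using (hasDerivAt_id (0:ℝ)).const_mul 2
    have h2 : HasDerivAt (fun η : ℝ => 1 - η) (-1) 0 := by
      simpa using (hasDerivAt_id (0:ℝ)).const_sub 1
    have := h1.div h2 (by norm_num)
    exact this.congr_deriv (by norm_num)
  -- derivative of g(η) = (2+d)² - 4(1-E²) at 0 is 8
  have hg : HasDerivAt (fun η : ℝ => (2 + 2 * η / (1 - η)) ^ 2 - 4 * (1 - E ^ 2)) 8 0 := by
    have h3 : HasDerivAt (fun η : ℝ => 2 + 2 * η / (1 - η)) 2 0 := hd.const_add 2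
    have := (h3.pow 2).sub_const (4 * (1 - E ^ 2))
    exact this.congr_deriv (by norm_num)
  have hg0 : (2 + 2 * (0:ℝ) / (1 - 0)) ^ 2 - 4 * (1 - E ^ 2) ≠ 0 := by
    have : (2 + 2 * (0:ℝ) / (1 - 0)) ^ 2 - 4 * (1 - E ^ 2) = 4 * E ^ 2 := by ring
    rw [this]; positivity
  have hsqrt : HasDerivAt (fun η : ℝ =>
      Real.sqrt ((2 + 2 * η / (1 - η)) ^ 2 - 4 * (1 - E ^ 2))) (2 / E) 0 := by
    have := hg.sqrt hg0
    convert this using 1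
    rw [hsq]
    field_simp
    ring
  have hnum : HasDerivAt (fun η : ℝ => 2 + 2 * η / (1 - η) +
      Real.sqrt ((2 + 2 * η / (1 - η)) ^ 2 - 4 * (1 - E ^ 2))) (2 + 2 / E) 0 :=
    (hd.const_add 2).add hsqrt
  have := hnum.div_const (2 * (1 + E))
  exact this.congr_deriv (by field_simp; ring)
end

section
/- Let ε > 0, E = tanh ε, and for η ∈ [0,1) let λ₂(η) be the smaller root of (1+E)λ² − (2 + 2η/(1−η))λ + (1−E) = 0. Then λ₂(0) = e^{−2ε} and the derivative of λ₂ at η = 0 equals −e^{−2ε}/tanh ε, i.e., λ₂(η) = e^{−2ε}(1 − η/tanh ε) + O(η²). -/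
/-- Perturbative expansion of the decaying root: `λ₂(0) = e^{-2ε}` and
`λ₂'(0) = -e^{-2ε}/tanh ε`. -/
theorem tsac_decaying_root_perturbation (ε : ℝ) (hε : 0 < ε) (E : ℝ) (hE : E = Real.tanh ε)
    (l₂ : ℝ → ℝ)
    (hl₂ : ∀ η : ℝ, l₂ η =
      (2 + 2 * η / (1 - η) -
        Real.sqrt ((2 + 2 * η / (1 - η)) ^ 2 - 4 * (1 - E ^ 2))) / (2 * (1 + E))) :
    l₂ 0 = Real.exp (-2 * ε) ∧
    HasDerivAt l₂ (-Real.exp (-2 * ε) / Real.tanh ε) 0 := by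
  have hc : (0:ℝ) < Real.cosh ε := Real.cosh_pos ε
  have h1 : Real.cosh ε + Real.sinh ε = Real.exp ε := Real.cosh_add_sinh ε
  have h2 : Real.cosh ε - Real.sinh ε = Real.exp (-ε) := Real.cosh_sub_sinh ε
  have hE1 : E < 1 := by
    rw [hE, Real.tanh_eq_sinh_div_cosh, div_lt_one hc]
    linarith [Real.exp_pos (-ε)]
  have hE0 : 0 < E := by
    rw [hE, Real.tanh_eq_sinh_div_cosh]
    exact div_pos (Real.sinh_pos_iff.2 hε) hc
  have hkey : Real.exp (-2*ε) = (1 - E)/(1 + E) := by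
    have hEne : (1:ℝ) + E ≠ 0 := by positivity
    have hxe : Real.exp (-2*ε) * Real.exp ε = Real.exp (-ε) := by
      rw [← Real.exp_add]; ring_nf
    have hxe2 : Real.exp (-(2*ε)) * Real.exp ε = Real.exp (-ε) := by
      rw [← Real.exp_add]; ring_nf
    rw [← h1, ← h2] at hxe hxe2
    rw [hE, Real.tanh_eq_sinh_div_cosh] at hEne ⊢
    field_simp
    linear_combination hxe2
  -- value at 0
  have hval0 : ((2:ℝ) + 2 * 0 / (1 - 0)) ^ 2 - 4 * (1 - E ^ 2) = (2*E)^2 := by ring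
  have hsq0 : Real.sqrt (((2:ℝ) + 2 * 0 / (1 - 0)) ^ 2 - 4 * (1 - E ^ 2)) = 2*E := by
    rw [hval0, Real.sqrt_sq (by positivity)]
  have hl0 : l₂ 0 = (1 - E)/(1 + E) := by
    rw [hl₂ 0, hsq0]
    have hEne : (1:ℝ) + E ≠ 0 := by positivity
    field_simp
    ring
  refine ⟨by rw [hl0, hkey], ?_⟩
  -- derivative
  have hfg : HasDerivAt (fun η : ℝ => 2 * η / (1 - η)) 2 0 := by
    have hf : HasDerivAt (fun η : ℝ => 2 * η) 2 0 := by
      simpa using (hasDerivAt_id (0:ℝ)).const_mul 2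
    have hg : HasDerivAt (fun η : ℝ => 1 - η) (-1) 0 := by
      simpa using (hasDerivAt_id (0:ℝ)).const_sub 1
    have := hf.div hg (by norm_num)
    refine this.congr_deriv (Eq.symm ?_)
    norm_num
  have hu : HasDerivAt (fun η : ℝ => 2 + 2 * η / (1 - η)) 2 0 := hfg.const_add 2
  have hv : HasDerivAt (fun η : ℝ => (2 + 2 * η / (1 - η)) ^ 2 - 4 * (1 - E ^ 2)) 8 0 := by
    have := (hu.pow 2).sub_const (4 * (1 - E ^ 2))
    refine this.congr_deriv (Eq.symm ?_)
    norm_num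
  have hvne : ((2:ℝ) + 2 * 0 / (1 - 0)) ^ 2 - 4 * (1 - E ^ 2) ≠ 0 := by
    rw [hval0]; positivity
  have hs : HasDerivAt (fun η : ℝ =>
      Real.sqrt ((2 + 2 * η / (1 - η)) ^ 2 - 4 * (1 - E ^ 2))) (2 / E) 0 := by
    have := hv.sqrt hvne
    convert this using 1
    rw [hval0, Real.sqrt_sq (by positivity)]
    field_simp
    ring
  have hmain := (hu.sub hs).div_const (2 * (1 + E))
  have hfun : l₂ = fun η : ℝ =>
      (2 + 2 * η / (1 - η) -
        Real.sqrt ((2 + 2 * η / (1 - η)) ^ 2 - 4 * (1 - E ^ 2))) / (2 * (1 + E)) := by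
    funext η; exact hl₂ η
  rw [hfun]
  refine hmain.congr_deriv (Eq.symm ?_)
  rw [hkey, ← hE]
  have hEne : (1:ℝ) + E ≠ 0 := by positivity
  field_simp
  ring
end
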